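/- Shared-background subtraction: for tokens t_s ≠ t_b, rationals slo ≤ shi and blo ≤ bhi, and dimension tag d, the expression Sub (Add (Meas t_s slo shi d) (Meas t_b blo bhi d)) (Meas t_b blo bhi d) is interchangeable with Meas t_s slo shi d. -/
import Mathlib


abbrev Token := ℕ

inductive Dim where
  | base
deriving DecidableEq

inductive Expr where
  | Exact (q : ℚ) (d : Dim)
  | Meas (t : Token) (lo hi : ℚ) (d : Dim)
  | Add (a b : Expr)
  | Sub (a b : Expr)
  | Mul (a b : Expr)
  | Div (a b : Expr)
  | Neg (a : Expr)

abbrev TokenEnv := Token → ℚ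

def TokenConsistent (σ : TokenEnv) : Expr → Prop
  | .Exact _ _ => True
  | .Meas t lo hi _ => lo ≤ σ t ∧ σ t ≤ hi
  | .Add a b => TokenConsistent σ a ∧ TokenConsistent σ b
  | .Sub a b => TokenConsistent σ a ∧ TokenConsistent σ b
  | .Mul a b => TokenConsistent σ a ∧ TokenConsistent σ b
  | .Div a b => TokenConsistent σ a ∧ TokenConsistent σ b
  | .Neg a => TokenConsistent σ a

def eval (σ : TokenEnv) : Expr → ℚ
  | .Exact q _ => q
  | .Meas t _ _ _ => σ t
  | .Add a b => eval σ a + eval σ b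
  | .Sub a b => eval σ a - eval σ b
  | .Mul a b => eval σ a * eval σ b
  | .Div a b => eval σ a / eval σ b
  | .Neg a => - eval σ a

def Encl (e : Expr) : Set ℚ := {v : ℚ | ∃ σ : TokenEnv, TokenConsistent σ e ∧ eval σ e = v}

def RewritesTo (e e' : Expr) : Prop := Encl e' ⊆ Encl e

def Interchangeable (e e' : Expr) : Prop := Encl e = Encl e'

def OneWayOnly (e e' : Expr) : Prop := RewritesTo e e' ∧ ¬ RewritesTo e' e

theorem shared_offset_subtraction_interchangeable_signal
    (ts tb : Token) (hne : ts ≠ tb) (slo shi blo bhi : ℚ)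
    (hs : slo ≤ shi) (hb : blo ≤ bhi) (d : Dim) :
    Interchangeable
      (.Sub (.Add (.Meas ts slo shi d) (.Meas tb blo bhi d)) (.Meas tb blo bhi d))
      (.Meas ts slo shi d) := by
  ext v
  constructor
  · rintro ⟨σ, ⟨⟨hc, _⟩, _⟩, rfl⟩
    exact ⟨σ, hc, by simp [eval]⟩
  · rintro ⟨σ, hc, rfl⟩
    refine ⟨Function.update σ tb blo, ⟨⟨?_, ?_⟩, ?_⟩, ?_⟩
    · simpa [TokenConsistent, Function.update_of_ne hne] using hc
    all_goals simp [TokenConsistent, eval, Function.update_of_ne hne, hb]
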